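/- For the path P_t on t ≥ 5 vertices, f_o(P_t) ≥ 2 + f_o(P_{t-3}). -/

import Mathlib

open Classical in
/-- Degree of `v` within the subgraph of `G` induced by the finite vertex set `s`. -/
noncomputable def indDeg {V : Type*} (G : SimpleGraph V) (s : Finset V) (v : V) : ℕ :=
  (s.filter (fun w => G.Adj v w)).card

/-- `s` induces a subgraph of `G` in which every vertex has odd degree. -/
def IsOddSet {V : Type*} (G : SimpleGraph V) (s : Finset V) : Prop :=
  ∀ v ∈ s, Odd (indDeg G s v)

/-- `f_o(G)`: maximum order of an induced subgraph with all degrees odd. -/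
noncomputable def fo {V : Type*} (G : SimpleGraph V) : ℕ :=
  sSup {n | ∃ s : Finset V, IsOddSet G s ∧ s.card = n}

/-- For t ≥ 5, `f_o(P_t) ≥ 2 + f_o(P_{t-3})`. -/
theorem stmt_5 (t : ℕ) (ht : 5 ≤ t) :
    2 + fo (SimpleGraph.pathGraph (t - 3)) ≤ fo (SimpleGraph.pathGraph t) := by
  classical
  set S : Set ℕ :=
    {n | ∃ s : Finset (Fin (t - 3)), IsOddSet (SimpleGraph.pathGraph (t - 3)) s ∧ s.card = n}
    with hS
  have hne : S.Nonempty := ⟨0, ∅, by intro v hv; simp at hv, rfl⟩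
  have hbdd : BddAbove S := by
    refine ⟨t, fun n hn => ?_⟩
    obtain ⟨s, _, hc⟩ := hn
    have := Finset.card_le_univ s
    simp only [Finset.card_univ, Fintype.card_fin] at this
    omega
  have hmem : fo (SimpleGraph.pathGraph (t - 3)) ∈ S := by
    rw [fo, ← hS]; exact Nat.sSup_mem hne hbdd
  obtain ⟨s, hs, hcard⟩ := hmem
  -- embedding i ↦ i + 3
  set emb : Fin (t - 3) ↪ Fin t :=
    ⟨fun i => ⟨(i : ℕ) + 3, by have := i.2; omega⟩, by
      intro a b h
      have : (a : ℕ) + 3 = (b : ℕ) + 3 := congrArg Fin.val h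
      exact Fin.ext (by omega)⟩ with hemb
  have h0 : (0 : ℕ) < t := by omega
  have h1 : (1 : ℕ) < t := by omega
  set z0 : Fin t := ⟨0, h0⟩
  set z1 : Fin t := ⟨1, h1⟩
  set s' : Finset (Fin t) := insert z0 (insert z1 (s.map emb)) with hs'
  have hembval : ∀ i : Fin (t - 3), ((emb i : Fin t) : ℕ) = (i : ℕ) + 3 := fun i => rfl
  have hz1nm : z1 ∉ s.map emb := by
    simp only [Finset.mem_map]
    rintro ⟨a, -, ha⟩
    have := congrArg Fin.val ha
    simp [hembval, z1] at this
  have hz0ni : z0 ∉ insert z1 (s.map emb) := by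
    simp only [Finset.mem_insert, Finset.mem_map]
    rintro (h | ⟨a, -, ha⟩)
    · exact absurd (congrArg Fin.val h) (by simp [z0, z1])
    · have := congrArg Fin.val ha
      simp [hembval] at this
  have hcard' : s'.card = 2 + s.card := by
    rw [hs', Finset.card_insert_of_notMem hz0ni, Finset.card_insert_of_notMem hz1nm,
      Finset.card_map]
    omega
  -- adjacency facts
  have adj_emb : ∀ a b : Fin (t - 3),
      (SimpleGraph.pathGraph t).Adj (emb a) (emb b) ↔
        (SimpleGraph.pathGraph (t - 3)).Adj a b := by
    intro a b
    rw [SimpleGraph.pathGraph_adj, SimpleGraph.pathGraph_adj]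
    simp only [hembval]
    omega
  have filt0 : s'.filter (fun w => (SimpleGraph.pathGraph t).Adj z0 w) = {z1} := by
    ext w
    simp only [Finset.mem_filter, hs', Finset.mem_insert, Finset.mem_map,
      Finset.mem_singleton, SimpleGraph.pathGraph_adj]
    constructor
    · rintro ⟨(rfl | rfl | ⟨a, -, rfl⟩), hadj⟩
      · simp [z0] at hadj
      · rfl
      · exfalso; simp [z0, hembval] at hadj
    · rintro rfl
      exact ⟨Or.inr (Or.inl rfl), by simp [z0, z1]⟩
  have filt1 : s'.filter (fun w => (SimpleGraph.pathGraph t).Adj z1 w) = {z0} := by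
    ext w
    simp only [Finset.mem_filter, hs', Finset.mem_insert, Finset.mem_map,
      Finset.mem_singleton, SimpleGraph.pathGraph_adj]
    constructor
    · rintro ⟨(rfl | rfl | ⟨a, -, rfl⟩), hadj⟩
      · rfl
      · simp [z1] at hadj
      · exfalso; simp [z1, hembval] at hadj
    · rintro rfl
      exact ⟨Or.inl rfl, by simp [z0, z1]⟩
  have filt_emb : ∀ v : Fin (t - 3),
      s'.filter (fun w => (SimpleGraph.pathGraph t).Adj (emb v) w) =
        (s.filter (fun w => (SimpleGraph.pathGraph (t - 3)).Adj v w)).map emb := by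
    intro v
    ext w
    simp only [Finset.mem_filter, hs', Finset.mem_insert, Finset.mem_map]
    constructor
    · rintro ⟨(rfl | rfl | ⟨a, ha, rfl⟩), hadj⟩
      · exfalso
        rw [SimpleGraph.pathGraph_adj] at hadj
        simp [z0, hembval] at hadj
      · exfalso
        rw [SimpleGraph.pathGraph_adj] at hadj
        simp [z1, hembval] at hadj
      · exact ⟨a, ⟨ha, (adj_emb v a).mp hadj⟩, rfl⟩
    · rintro ⟨a, ⟨ha, hadj⟩, rfl⟩
      exact ⟨Or.inr (Or.inr ⟨a, ha, rfl⟩), (adj_emb v a).mpr hadj⟩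
  have hodd : IsOddSet (SimpleGraph.pathGraph t) s' := by
    intro v hv
    rw [hs'] at hv
    simp only [Finset.mem_insert, Finset.mem_map] at hv
    rcases hv with rfl | rfl | ⟨a, ha, rfl⟩
    · rw [indDeg, filt0]; simp
    · rw [indDeg, filt1]; simp
    · rw [indDeg, filt_emb a, Finset.card_map]
      exact hs a ha
  have hbdd' : BddAbove {n | ∃ u : Finset (Fin t),
      IsOddSet (SimpleGraph.pathGraph t) u ∧ u.card = n} := by
    refine ⟨t, fun n hn => ?_⟩
    obtain ⟨u, _, hc⟩ := hn
    have := Finset.card_le_univ u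
    simp only [Finset.card_univ, Fintype.card_fin] at this
    omega
  have : 2 + fo (SimpleGraph.pathGraph (t - 3)) = s'.card := by omega
  rw [this, fo]
  exact le_csSup hbdd' ⟨s', hodd, rfl⟩
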